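/- arXiv:gr-qc/0402124 — 2 statements merged into one kernel-verified Lean document; each statement's English description precedes it below -/
import Mathlib

section
/- Let F, G : ℝ → ℝ be positive measurable functions and suppose F^{-2} is not locally integrable at some point u₁ ∈ ℝ (i.e., ∫ over some interval ending at u₁ of F^{-2} diverges). Then there exists a geodesic of the metric ds² = -2 du dv + F(u)² dy² + G(u)² dz² (given by the quadratures with constants V ≠ 0, Y ≠ 0) along which the coordinate v(τ) diverges as u(τ) → u₁, i.e., v is not extendible past the finite affine parameter value τ₁ = (u₀ - u₁)/V as a finite-valued solution. -/
open MeasureTheory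

/-- If `F^{-2}` fails to be integrable on some interval ending at `u₁`, then there is a
geodesic of the plane-wave metric (with constants `V ≠ 0`, `Y ≠ 0`) whose coordinate `v`
is not a finite-valued solution up to the finite affine parameter `τ₁ = (u₀ - u₁)/V`:
the `v`-quadrature integrand is not interval integrable from `0` to `τ₁`. -/
theorem plane_wave_incomplete_of_nonintegrable (F G : ℝ → ℝ)
    (hFpos : ∀ u : ℝ, 0 < F u) (hGpos : ∀ u : ℝ, 0 < G u)
    (hFm : Measurable F) (hGm : Measurable G) (u₁ : ℝ)
    (hdiv : ∃ a : ℝ, a < u₁ ∧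
      ¬ IntegrableOn (fun u : ℝ => ((F u) ^ 2)⁻¹) (Set.Ioo a u₁) volume) :
    ∃ V Y Z δ u₀ : ℝ, V ≠ 0 ∧ Y ≠ 0 ∧ 0 < (u₀ - u₁) / V ∧
      ¬ IntervalIntegrable (fun s : ℝ =>
        (1 / (2 * V ^ 2)) * (δ + Y ^ 2 * ((F (u₀ - V * s)) ^ 2)⁻¹
          + Z ^ 2 * ((G (u₀ - V * s)) ^ 2)⁻¹)) volume 0 ((u₀ - u₁) / V) := by
  obtain ⟨a, ha, hnint⟩ := hdiv
  refine ⟨-1, 1, 0, 0, a, by norm_num, one_ne_zero, by rw [div_neg, div_one, neg_sub]; exact sub_pos.2 ha, ?_⟩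
  intro hInt
  apply hnint
  have h1 : IntervalIntegrable (fun s : ℝ => ((F (a + s)) ^ 2)⁻¹) volume 0
      ((a - u₁) / (-1 : ℝ)) := by
    have h2 := hInt.const_mul (2 : ℝ)
    refine h2.congr ?_
    intro s _
    beta_reduce
    ring_nf
  have h3 := h1.comp_sub_right a
  have h4 : IntervalIntegrable (fun u : ℝ => ((F u) ^ 2)⁻¹) volume a u₁ := by
    have : (0 : ℝ) + a = a := by ring
    have e2 : (a - u₁) / (-1 : ℝ) + a = u₁ := by ring
    rw [this, e2] at h3
    exact h3.congr (by intro x _; beta_reduce; ring_nf)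
  have h5 : IntegrableOn (fun u : ℝ => ((F u) ^ 2)⁻¹) (Set.Ioc a u₁) volume := by
    rw [intervalIntegrable_iff_integrableOn_Ioc_of_le ha.le] at h4
    exact h4
  exact h5.mono_set Set.Ioo_subset_Ioc_self
end

section
/- Let f(x) = Σ_{i=0}^m a_i x^i and g(x) = Σ_{j=0}^n b_j x^j be polynomials with a_m > 0, and define U(t,0) = ∫_0^1 (τ/√(1-τ²)) [ t g(|t|τ) + f(|t|τ) + |t|τ f'(|t|τ) ] dτ. If m > n + 1, then U(t,0) → +∞ as |t| → ∞; in particular, for every constant b there exists T such that U(t,0) ≥ b - (1/2) ln|t| for all |t| ≥ T. -/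
open Filter MeasureTheory Set intervalIntegral

lemma intW : IntervalIntegrable (fun τ : ℝ => τ / Real.sqrt (1 - τ^2)) volume 0 1 := by
  apply intervalIntegrable_deriv_of_nonneg (g := fun τ : ℝ => -Real.sqrt (1 - τ^2))
  · exact (Real.continuous_sqrt.comp (by continuity)).neg.continuousOn
  · intro x hx
    simp only [min_eq_left, max_eq_right, zero_le_one, mem_Ioo] at hx
    have hx2 : (0:ℝ) < 1 - x^2 := by nlinarith [hx.1, hx.2]
    have hs : Real.sqrt (1 - x^2) ≠ 0 := by positivity
    have h1 : HasDerivAt (fun τ : ℝ => 1 - τ^2) (-(2*x)) x := by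
      simpa using ((hasDerivAt_pow 2 x).const_sub 1)
    have h2 := (Real.hasDerivAt_sqrt hx2.ne').comp x h1
    refine h2.neg.congr_deriv ?_
    field_simp
  · intro x hx
    simp only [min_eq_left, max_eq_right, zero_le_one, mem_Ioo] at hx
    exact div_nonneg hx.1.le (Real.sqrt_nonneg _)

lemma intPow (k : ℕ) : IntervalIntegrable (fun τ : ℝ => τ^(k+1) / Real.sqrt (1 - τ^2)) volume 0 1 := by
  apply intW.mono_fun
  · apply Measurable.aestronglyMeasurable
    exact (measurable_id.pow_const _).div ((measurable_const.sub (measurable_id.pow_const 2)).sqrt)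
  · rw [Filter.EventuallyLE, ae_restrict_iff' measurableSet_uIoc]
    filter_upwards with x hx
    rw [Set.uIoc_of_le (by norm_num : (0:ℝ) ≤ 1)] at hx
    simp only [Real.norm_eq_abs, abs_div,
      abs_of_nonneg hx.1.le, abs_of_nonneg (pow_nonneg hx.1.le (k+1)),
      abs_of_nonneg (Real.sqrt_nonneg (1 - x^2))]
    gcongr
    calc x^(k+1) ≤ x^1 := pow_le_pow_of_le_one hx.1.le hx.2 (by omega)
    _ = x := pow_one x

noncomputable def J (k : ℕ) : ℝ := ∫ τ in (0:ℝ)..1, τ^(k+1) / Real.sqrt (1 - τ^2)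

lemma Jpos (k : ℕ) : 0 < J k := by
  apply intervalIntegral_pos_of_pos_on (intPow k) _ one_pos
  intro x hx
  have hx2 : (0:ℝ) < 1 - x^2 := by nlinarith [hx.1, hx.2]
  exact div_pos (pow_pos hx.1 _) (Real.sqrt_pos.mpr hx2)

lemma xpow_aux (i : ℕ) (X : ℝ) : X * ((i:ℝ) * X^(i-1)) = (i:ℝ) * X^i := by
  cases i with
  | zero => simp
  | succ k => push_cast; rw [pow_succ]; ring

/-- Polynomial initial-data criterion: if `f` has degree `m` with positive leading
coefficient, `g` has degree `n` and `m > n + 1`, then the axis value `U(t,0)` of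
John's formula tends to `+∞` as `|t| → ∞`; in particular it eventually dominates
`b - (1/2) ln|t|` for every constant `b`. -/
theorem polynomial_axis_growth (m n : ℕ) (a c : ℕ → ℝ)
    (ham : 0 < a m) (hmn : n + 1 < m)
    (f g : ℝ → ℝ)
    (hf : f = fun x : ℝ => ∑ i ∈ Finset.range (m + 1), a i * x ^ i)
    (hg : g = fun x : ℝ => ∑ j ∈ Finset.range (n + 1), c j * x ^ j)
    (U : ℝ → ℝ)
    (hU : U = fun t : ℝ => ∫ τ in (0:ℝ)..1,
      (τ / Real.sqrt (1 - τ ^ 2)) *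
        (t * g (|t| * τ) + f (|t| * τ) + |t| * τ * deriv f (|t| * τ))) :
    Tendsto U atTop atTop ∧ Tendsto U atBot atTop ∧
    ∀ b : ℝ, ∃ T : ℝ, ∀ t : ℝ, T ≤ |t| → b - (1 / 2) * Real.log |t| ≤ U t := by
  -- derivative of f
  have hderivf : ∀ x : ℝ, deriv f x = ∑ i ∈ Finset.range (m+1), a i * ((i:ℝ) * x^(i-1)) := by
    intro x
    have : HasDerivAt f (∑ i ∈ Finset.range (m+1), a i * ((i:ℝ) * x^(i-1))) x := by
      rw [hf]
      apply HasDerivAt.fun_sum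
      intro i _
      exact (hasDerivAt_pow i x).const_mul (a i)
    exact this.deriv
  -- representation of U
  have hrep : ∀ t : ℝ, U t =
      (∑ i ∈ Finset.range (m+1), (a i * ((i:ℝ)+1) * |t|^i) * J i)
      + ∑ j ∈ Finset.range (n+1), (c j * t * |t|^j) * J j := by
    intro t
    rw [hU]
    have hint : ∀ τ : ℝ,
        (τ / Real.sqrt (1 - τ^2)) *
          (t * g (|t| * τ) + f (|t| * τ) + |t| * τ * deriv f (|t| * τ))
        = (∑ i ∈ Finset.range (m+1), (a i * ((i:ℝ)+1) * |t|^i) * (τ^(i+1) / Real.sqrt (1-τ^2)))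
        + ∑ j ∈ Finset.range (n+1), (c j * t * |t|^j) * (τ^(j+1) / Real.sqrt (1-τ^2)) := by
      intro τ
      rw [hderivf (|t| * τ), hf, hg]
      calc (τ / Real.sqrt (1 - τ^2)) *
            (t * ((fun x : ℝ => ∑ j ∈ Finset.range (n + 1), c j * x ^ j) (|t| * τ))
              + ((fun x : ℝ => ∑ i ∈ Finset.range (m + 1), a i * x ^ i) (|t| * τ))
              + |t| * τ * ∑ i ∈ Finset.range (m+1), a i * ((i:ℝ) * (|t| * τ)^(i-1)))
          = (∑ i ∈ Finset.range (m+1),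
              ((τ / Real.sqrt (1 - τ^2)) * (a i * (|t| * τ)^i)
                + (τ / Real.sqrt (1 - τ^2)) * ((|t| * τ) * (a i * ((i:ℝ) * (|t| * τ)^(i-1))))))
            + ∑ j ∈ Finset.range (n+1),
                (τ / Real.sqrt (1 - τ^2)) * (t * (c j * (|t| * τ)^j)) := by
            simp only [Finset.mul_sum, Finset.sum_add_distrib, mul_add]
            ring
        _ = _ := by
            congr 1
            · apply Finset.sum_congr rfl
              intro i _
              rw [mul_left_comm (|t| * τ) (a i), xpow_aux i (|t| * τ), mul_pow]
              ring
            · apply Finset.sum_congr rfl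
              intro j _
              rw [mul_pow]
              ring
    simp only [hint]
    have hi1 : ∀ i ∈ Finset.range (m+1), IntervalIntegrable
        (fun τ : ℝ => (a i * ((i:ℝ)+1) * |t|^i) * (τ^(i+1) / Real.sqrt (1-τ^2))) volume 0 1 :=
      fun i _ => (intPow i).const_mul _
    have hi2 : ∀ j ∈ Finset.range (n+1), IntervalIntegrable
        (fun τ : ℝ => (c j * t * |t|^j) * (τ^(j+1) / Real.sqrt (1-τ^2))) volume 0 1 :=
      fun j _ => (intPow j).const_mul _
    have e1 : (fun τ : ℝ => ∑ i ∈ Finset.range (m+1),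
        (a i * ((i:ℝ)+1) * |t|^i) * (τ^(i+1) / Real.sqrt (1-τ^2)))
        = ∑ i ∈ Finset.range (m+1),
          (fun τ : ℝ => (a i * ((i:ℝ)+1) * |t|^i) * (τ^(i+1) / Real.sqrt (1-τ^2))) := by
      funext τ; simp
    have e2 : (fun τ : ℝ => ∑ j ∈ Finset.range (n+1),
        (c j * t * |t|^j) * (τ^(j+1) / Real.sqrt (1-τ^2)))
        = ∑ j ∈ Finset.range (n+1),
          (fun τ : ℝ => (c j * t * |t|^j) * (τ^(j+1) / Real.sqrt (1-τ^2))) := by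
      funext τ; simp
    have hsum1 : IntervalIntegrable (fun τ : ℝ => ∑ i ∈ Finset.range (m+1),
        (a i * ((i:ℝ)+1) * |t|^i) * (τ^(i+1) / Real.sqrt (1-τ^2))) volume 0 1 :=
      e1 ▸ IntervalIntegrable.sum _ hi1
    have hsum2 : IntervalIntegrable (fun τ : ℝ => ∑ j ∈ Finset.range (n+1),
        (c j * t * |t|^j) * (τ^(j+1) / Real.sqrt (1-τ^2))) volume 0 1 :=
      e2 ▸ IntervalIntegrable.sum _ hi2
    rw [intervalIntegral.integral_add hsum1 hsum2]
    rw [intervalIntegral.integral_finset_sum hi1, intervalIntegral.integral_finset_sum hi2]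
    simp only [intervalIntegral.integral_const_mul]
    rfl
  -- constants
  set A : ℝ := a m * ((m:ℝ)+1) * J m with hA
  have hApos : 0 < A := mul_pos (mul_pos ham (by positivity)) (Jpos m)
  set B1 : ℝ := ∑ i ∈ Finset.range m, |a i| * ((i:ℝ)+1) * J i with hB1
  set B2 : ℝ := ∑ j ∈ Finset.range (n+1), |c j| * J j with hB2
  have hB1nn : 0 ≤ B1 := Finset.sum_nonneg fun i _ =>
    mul_nonneg (mul_nonneg (abs_nonneg _) (by positivity)) (Jpos i).le
  have hB2nn : 0 ≤ B2 := Finset.sum_nonneg fun j _ => mul_nonneg (abs_nonneg _) (Jpos j).le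
  -- key lower bound
  have key : ∀ t : ℝ, 1 ≤ |t| → |t|^(m-1) * (A * |t| - (B1 + B2)) ≤ U t := by
    intro t ht
    rw [hrep t, Finset.sum_range_succ]
    have hpm : |t|^(m-1) * |t| = |t|^m := by
      rw [← pow_succ]
      congr 1
      omega
    have h1 : ∀ i ∈ Finset.range m,
        -(|a i| * ((i:ℝ)+1) * J i * |t|^(m-1)) ≤ (a i * ((i:ℝ)+1) * |t|^i) * J i := by
      intro i hi
      have hJ := (Jpos i).le
      have hpow : |t|^i ≤ |t|^(m-1) :=
        pow_le_pow_right₀ ht (by have := Finset.mem_range.mp hi; omega)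
      have habs : |(a i * ((i:ℝ)+1) * |t|^i) * J i| ≤ |a i| * ((i:ℝ)+1) * J i * |t|^(m-1) := by
        have h0 : |(a i * ((i:ℝ)+1) * |t|^i) * J i| = (|a i| * ((i:ℝ)+1) * J i) * |t|^i := by
          rw [abs_mul, abs_mul, abs_mul, abs_of_nonneg hJ,
            abs_of_nonneg (pow_nonneg (abs_nonneg t) i),
            abs_of_nonneg (by positivity : (0:ℝ) ≤ (i:ℝ)+1)]
          ring
        rw [h0]
        calc (|a i| * ((i:ℝ)+1) * J i) * |t|^i
            ≤ (|a i| * ((i:ℝ)+1) * J i) * |t|^(m-1) :=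
              mul_le_mul_of_nonneg_left hpow (by positivity)
          _ = |a i| * ((i:ℝ)+1) * J i * |t|^(m-1) := by ring
      linarith [neg_abs_le ((a i * ((i:ℝ)+1) * |t|^i) * J i)]
    have h2 : ∀ j ∈ Finset.range (n+1),
        -(|c j| * J j * |t|^(m-1)) ≤ (c j * t * |t|^j) * J j := by
      intro j hj
      have hJ := (Jpos j).le
      have hpow : |t|^(j+1) ≤ |t|^(m-1) :=
        pow_le_pow_right₀ ht (by have := Finset.mem_range.mp hj; omega)
      have habs : |(c j * t * |t|^j) * J j| ≤ |c j| * J j * |t|^(m-1) := by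
        have h0 : |(c j * t * |t|^j) * J j| = (|c j| * J j) * |t|^(j+1) := by
          rw [abs_mul, abs_mul, abs_mul, abs_of_nonneg hJ,
            abs_of_nonneg (pow_nonneg (abs_nonneg t) j), pow_succ]
          ring
        rw [h0]
        calc (|c j| * J j) * |t|^(j+1) ≤ (|c j| * J j) * |t|^(m-1) :=
              mul_le_mul_of_nonneg_left hpow (by positivity)
          _ = |c j| * J j * |t|^(m-1) := by ring
      linarith [neg_abs_le ((c j * t * |t|^j) * J j)]
    have hs1 : -(B1 * |t|^(m-1)) ≤ ∑ i ∈ Finset.range m, (a i * ((i:ℝ)+1) * |t|^i) * J i := by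
      have := Finset.sum_le_sum h1
      rw [Finset.sum_neg_distrib, ← Finset.sum_mul] at this
      exact this
    have hs2 : -(B2 * |t|^(m-1)) ≤ ∑ j ∈ Finset.range (n+1), (c j * t * |t|^j) * J j := by
      have := Finset.sum_le_sum h2
      rw [Finset.sum_neg_distrib, ← Finset.sum_mul] at this
      exact this
    have htop : (a m * ((m:ℝ)+1) * |t|^m) * J m = A * |t|^m := by rw [hA]; ring
    have hexp : |t|^(m-1) * (A * |t| - (B1 + B2))
        = A * |t|^m - B1 * |t|^(m-1) - B2 * |t|^(m-1) := by
      rw [← hpm]; ring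
    rw [htop, hexp]
    linarith
  -- from the key bound: eventual domination of any constant
  have key2 : ∀ y : ℝ, ∃ T : ℝ, 1 ≤ T ∧ ∀ t : ℝ, T ≤ |t| → y ≤ U t := by
    intro y
    refine ⟨max 1 ((B1 + B2 + max y 0) / A), le_max_left _ _, fun t ht => ?_⟩
    have ht1 : 1 ≤ |t| := le_trans (le_max_left _ _) ht
    have ht2 : (B1 + B2 + max y 0) / A ≤ |t| := le_trans (le_max_right _ _) ht
    have hAt : B1 + B2 + max y 0 ≤ A * |t| := by
      rw [div_le_iff₀ hApos] at ht2
      linarith [ht2]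
    have hfac : max y 0 ≤ A * |t| - (B1 + B2) := by linarith
    have hone : (1:ℝ) ≤ |t|^(m-1) := one_le_pow₀ ht1
    calc y ≤ max y 0 := le_max_left _ _
      _ ≤ A * |t| - (B1 + B2) := hfac
      _ ≤ |t|^(m-1) * (A * |t| - (B1 + B2)) :=
          le_mul_of_one_le_left (le_trans (le_max_right y 0) hfac) hone
      _ ≤ U t := key t ht1
  refine ⟨?_, ?_, ?_⟩
  · rw [tendsto_atTop]
    intro y
    obtain ⟨T, hT1, hT⟩ := key2 y
    filter_upwards [eventually_ge_atTop T] with t ht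
    exact hT t (by rw [abs_of_nonneg (by linarith)]; exact ht)
  · rw [tendsto_atTop]
    intro y
    obtain ⟨T, hT1, hT⟩ := key2 y
    filter_upwards [eventually_le_atBot (-T)] with t ht
    exact hT t (by rw [abs_of_nonpos (by linarith)]; linarith)
  · intro b
    obtain ⟨T, hT1, hT⟩ := key2 b
    refine ⟨T, fun t ht => ?_⟩
    have h1 : (1:ℝ) ≤ |t| := le_trans hT1 ht
    have hlog : 0 ≤ Real.log |t| := Real.log_nonneg h1
    have := hT t ht
    linarith
end
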